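/- Under the unique-optimum assumption, the LP sharpness of the primal problem and of the dual slack problem have the closed forms μ_p = (1/‖P_{Null(A)}(c)‖) · min_{1≤j≤n−m} s*_{m+j}/√(‖(B⁻¹N)_{·,j}‖² + 1) and μ_d = (1/‖q‖) · min_{1≤i≤m} x*_i/√(‖(B⁻¹N)_{i,·}‖² + 1), where P_{Null(A)} is orthogonal projection onto Null(A). -/

import Mathlib

open Matrix
open scoped BigOperators

noncomputable section

namespace LPPaper

/-- Euclidean norm of a finite real vector. -/
def enorm {k : ℕ} (v : Fin k → ℝ) : ℝ := Real.sqrt (∑ i, (v i) ^ 2)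

/-- ℓ₁ norm of a finite real vector. -/
def l1 {k : ℕ} (v : Fin k → ℝ) : ℝ := ∑ i, |v i|

/-- Spectral norm (operator 2-norm w.r.t. Euclidean norms) of a real matrix. -/
def specNorm {α β : Type*} [Fintype α] [Fintype β] [DecidableEq β] (M : Matrix α β ℝ) : ℝ :=
  ‖LinearMap.toContinuousLinearMap (Matrix.toEuclideanLin M)‖

variable {m n : ℕ}

/-- Embedding of basic indices (the first `m` coordinates). -/
def bIdx (hmn : m ≤ n) (i : Fin m) : Fin n := Fin.castLE hmn i

/-- Embedding of nonbasic indices (the last `n - m` coordinates). -/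
def nIdx (hmn : m ≤ n) (j : Fin (n - m)) : Fin n := ⟨m + j.val, by have := j.isLt; omega⟩

/-- The basis matrix `B`: the first `m` columns of `A`. -/
def Bmat (hmn : m ≤ n) (A : Matrix (Fin m) (Fin n) ℝ) : Matrix (Fin m) (Fin m) ℝ :=
  Matrix.of fun i j => A i (bIdx hmn j)

/-- The nonbasic matrix `N`: the last `n - m` columns of `A`. -/
def Nmat (hmn : m ≤ n) (A : Matrix (Fin m) (Fin n) ℝ) : Matrix (Fin m) (Fin (n - m)) ℝ :=
  Matrix.of fun i j => A i (nIdx hmn j)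

/-- The simplex tableau `B⁻¹N` at the optimal basis. -/
def BN (hmn : m ≤ n) (A : Matrix (Fin m) (Fin n) ℝ) : Matrix (Fin m) (Fin (n - m)) ℝ :=
  (Bmat hmn A)⁻¹ * Nmat hmn A

/-- `q := Aᵀ(AAᵀ)⁻¹ b`. -/
def qvec (A : Matrix (Fin m) (Fin n) ℝ) (b : Fin m → ℝ) : Fin n → ℝ :=
  Aᵀ *ᵥ ((A * Aᵀ)⁻¹ *ᵥ b)

/-- Primal feasibility: `Ax = b`, `x ≥ 0`. -/
def PrimalFeasible (A : Matrix (Fin m) (Fin n) ℝ) (b : Fin m → ℝ) (x : Fin n → ℝ) : Prop :=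
  A *ᵥ x = b ∧ ∀ i, 0 ≤ x i

/-- Dual feasibility: `Aᵀy + s = c`, `s ≥ 0`. -/
def DualFeasible (A : Matrix (Fin m) (Fin n) ℝ) (c : Fin n → ℝ) (y : Fin m → ℝ)
    (s : Fin n → ℝ) : Prop :=
  Aᵀ *ᵥ y + s = c ∧ ∀ i, 0 ≤ s i

/-- The unique-optimum assumption (Assumption 1 of the paper), with the optimal basis being
(after a permutation of the variables) the set of the first `m` indices: the rows of `A` are
linearly independent, `x*` is the unique primal optimal solution, `(y*, s*)` the unique dual
optimal solution, the basis matrix `B` is invertible, `x*ᵢ > 0` exactly for the first `m`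
indices and `s*ᵢ > 0` exactly for the remaining indices. -/
structure UniqueOpt (hmn : m ≤ n) (A : Matrix (Fin m) (Fin n) ℝ) (b : Fin m → ℝ)
    (c : Fin n → ℝ) (xstar : Fin n → ℝ) (ystar : Fin m → ℝ) (sstar : Fin n → ℝ) : Prop where
  rows_indep : LinearIndependent ℝ (fun i => A i)
  primal_feas : PrimalFeasible A b xstar
  primal_opt : ∀ x, PrimalFeasible A b x → c ⬝ᵥ xstar ≤ c ⬝ᵥ x
  primal_uniq : ∀ x, PrimalFeasible A b x → c ⬝ᵥ x = c ⬝ᵥ xstar → x = xstar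
  dual_feas : DualFeasible A c ystar sstar
  dual_opt : ∀ y s, DualFeasible A c y s → b ⬝ᵥ y ≤ b ⬝ᵥ ystar
  dual_uniq : ∀ y s, DualFeasible A c y s → b ⬝ᵥ y = b ⬝ᵥ ystar → y = ystar ∧ s = sstar
  basis_isUnit : IsUnit (Bmat hmn A).det
  xstar_supp : ∀ i : Fin n, 0 < xstar i ↔ (i : ℕ) < m
  sstar_supp : ∀ i : Fin n, 0 < sstar i ↔ m ≤ (i : ℕ)

/-- The `max` factor appearing in the geometric condition number `Φ`. -/
def PhiFactor (hmn : m ≤ n) (A : Matrix (Fin m) (Fin n) ℝ) (xstar sstar : Fin n → ℝ) : ℝ :=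
  max (⨆ j : Fin (n - m),
        Real.sqrt ((∑ i, (BN hmn A i j) ^ 2) + 1) / sstar (nIdx hmn j))
      (⨆ i : Fin m,
        Real.sqrt ((∑ j, (BN hmn A i j) ^ 2) + 1) / xstar (bIdx hmn i))

/-- The geometric condition number `Φ`. -/
def Phi (hmn : m ≤ n) (A : Matrix (Fin m) (Fin n) ℝ) (xstar sstar : Fin n → ℝ) : ℝ :=
  (l1 xstar + l1 sstar) * PhiFactor hmn A xstar sstar


/-- The optimal-solution set of the generic LP `min gᵀu` over `V ∩ ℝⁿ₊`. -/
def OPTset (V : Set (Fin n → ℝ)) (g : Fin n → ℝ) : Set (Fin n → ℝ) :=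
  {u | (u ∈ V ∧ ∀ i, 0 ≤ u i) ∧ ∀ v, v ∈ V → (∀ i, 0 ≤ v i) → g ⬝ᵥ u ≤ g ⬝ᵥ v}

/-- Stability under data perturbations of the generic LP `min gᵀu` over `V ∩ ℝⁿ₊`. -/
def genZeta (V : Set (Fin n → ℝ)) (g : Fin n → ℝ) : ℝ :=
  sInf {t | ∃ dg : Fin n → ℝ, t = enorm dg ∧ (OPTset V (g + dg)).Nonempty ∧
    ¬ OPTset V (g + dg) ⊆ OPTset V g}

/-- The primal affine subspace `V_p = q + Null(A)`. -/
def Vp (A : Matrix (Fin m) (Fin n) ℝ) (b : Fin m → ℝ) : Set (Fin n → ℝ) :=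
  {x | ∃ v, A *ᵥ v = 0 ∧ x = qvec A b + v}

/-- The dual affine subspace `V_d = c + Im(Aᵀ)`. -/
def Vd (A : Matrix (Fin m) (Fin n) ℝ) (c : Fin n → ℝ) : Set (Fin n → ℝ) :=
  {s | ∃ y, s = c + Aᵀ *ᵥ y}

/-- Euclidean distance from a point to a set of vectors. -/
def edistSet {k : ℕ} (u : Fin k → ℝ) (S : Set (Fin k → ℝ)) : ℝ :=
  sInf {d | ∃ v ∈ S, d = enorm (u - v)}

/-- LP sharpness of the generic LP `min gᵀu` over `V ∩ ℝⁿ₊` with unique optimum `u*`: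
`μ := inf_{u ∈ F \ {u*}} Dist(u, V ∩ {v : gᵀv = gᵀu*}) / ‖u - u*‖`. -/
def genMu (V : Set (Fin n → ℝ)) (g ustar : Fin n → ℝ) : ℝ :=
  sInf {t | ∃ u, u ∈ V ∧ (∀ i, 0 ≤ u i) ∧ u ≠ ustar ∧
    t = edistSet u (V ∩ {v | g ⬝ᵥ v = g ⬝ᵥ ustar}) / enorm (u - ustar)}


/-! ### Auxiliary lemmas -/

section Aux

lemma enorm_nonneg {k : ℕ} (v : Fin k → ℝ) : 0 ≤ enorm v := Real.sqrt_nonneg _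

lemma enorm_sq_eq {k : ℕ} (v : Fin k → ℝ) : enorm v ^ 2 = ∑ i, v i ^ 2 :=
  Real.sq_sqrt (by positivity)

lemma enorm_eq_norm {k : ℕ} (v : Fin k → ℝ) :
    enorm v = ‖(WithLp.equiv 2 (Fin k → ℝ)).symm v‖ := by
  rw [EuclideanSpace.norm_eq]
  unfold enorm
  congr 1
  refine Finset.sum_congr rfl fun i _ => ?_
  rw [WithLp.equiv_symm_apply, PiLp.toLp_apply, Real.norm_eq_abs, sq_abs]

lemma dot_eq_inner {k : ℕ} (u v : Fin k → ℝ) :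
    u ⬝ᵥ v = (inner ℝ ((WithLp.equiv 2 (Fin k → ℝ)).symm u)
      ((WithLp.equiv 2 (Fin k → ℝ)).symm v) : ℝ) := by
  rw [PiLp.inner_apply]
  simp [dotProduct, RCLike.inner_apply, WithLp.equiv_symm_apply, PiLp.toLp_apply, mul_comm]

lemma dot_le_enorm {k : ℕ} (u v : Fin k → ℝ) : u ⬝ᵥ v ≤ enorm u * enorm v := by
  rw [dot_eq_inner, enorm_eq_norm, enorm_eq_norm]
  exact real_inner_le_norm _ _

lemma enorm_smul {k : ℕ} (t : ℝ) (v : Fin k → ℝ) : enorm (t • v) = |t| * enorm v := by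
  rw [enorm_eq_norm, enorm_eq_norm]
  have h : (WithLp.equiv 2 (Fin k → ℝ)).symm (t • v)
      = t • (WithLp.equiv 2 (Fin k → ℝ)).symm v := rfl
  rw [h, norm_smul, Real.norm_eq_abs]

lemma enorm_pos {k : ℕ} {v : Fin k → ℝ} (h : v ≠ 0) : 0 < enorm v := by
  obtain ⟨i, hi⟩ := Function.ne_iff.mp h
  apply Real.sqrt_pos.mpr
  have h1 : 0 < v i ^ 2 := lt_of_le_of_ne (sq_nonneg _) (Ne.symm (pow_ne_zero 2 hi))
  have h2 : v i ^ 2 ≤ ∑ j, v j ^ 2 :=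
    Finset.single_le_sum (fun j _ => sq_nonneg (v j)) (Finset.mem_univ i)
  linarith

def splitEquiv (hmn : m ≤ n) : Fin m ⊕ Fin (n - m) ≃ Fin n :=
  finSumFinEquiv.trans (finCongr (Nat.add_sub_cancel' hmn))

lemma splitEquiv_inl (hmn : m ≤ n) (i : Fin m) : splitEquiv hmn (Sum.inl i) = bIdx hmn i := by
  ext; simp [splitEquiv, bIdx]

lemma splitEquiv_inr (hmn : m ≤ n) (j : Fin (n - m)) :
    splitEquiv hmn (Sum.inr j) = nIdx hmn j := by
  ext; simp [splitEquiv, nIdx]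

lemma sum_split {M : Type*} [AddCommMonoid M] (hmn : m ≤ n) (f : Fin n → M) :
    ∑ i, f i = ∑ i : Fin m, f (bIdx hmn i) + ∑ j : Fin (n - m), f (nIdx hmn j) := by
  rw [← Equiv.sum_comp (splitEquiv hmn) f, Fintype.sum_sum_type]
  simp [splitEquiv_inl, splitEquiv_inr]

lemma forall_split (hmn : m ≤ n) {P : Fin n → Prop}
    (hb : ∀ i, P (bIdx hmn i)) (hn : ∀ j, P (nIdx hmn j)) : ∀ x, P x := by
  intro x
  rcases lt_or_ge (x : ℕ) m with h | h
  · have hx : x = bIdx hmn ⟨x, h⟩ := by ext; rfl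
    rw [hx]; exact hb _
  · have hx : x = nIdx hmn ⟨(x : ℕ) - m, by have := x.isLt; omega⟩ := by
      ext; simp [nIdx]; omega
    rw [hx]; exact hn _

lemma ext_split (hmn : m ≤ n) {f g : Fin n → ℝ}
    (hb : ∀ i, f (bIdx hmn i) = g (bIdx hmn i))
    (hn : ∀ j, f (nIdx hmn j) = g (nIdx hmn j)) : f = g :=
  funext (forall_split hmn hb hn)

/-- glue basic/nonbasic parts into a vector. -/
def glue (hmn : m ≤ n) (x : Fin m → ℝ) (y : Fin (n - m) → ℝ) : Fin n → ℝ :=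
  fun i => if h : (i : ℕ) < m then x ⟨i, h⟩ else y ⟨(i : ℕ) - m, by have := i.isLt; omega⟩

lemma glue_b (hmn : m ≤ n) (x : Fin m → ℝ) (y : Fin (n - m) → ℝ) (i : Fin m) :
    glue hmn x y (bIdx hmn i) = x i := by
  have h : (↑(Fin.castLE hmn i) : ℕ) < m := i.isLt
  simp [glue, bIdx]

lemma glue_n (hmn : m ≤ n) (x : Fin m → ℝ) (y : Fin (n - m) → ℝ) (j : Fin (n - m)) :
    glue hmn x y (nIdx hmn j) = y j := by
  simp [glue, nIdx]

/-- basic part of a vector. -/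
def restB (hmn : m ≤ n) (v : Fin n → ℝ) : Fin m → ℝ := fun i => v (bIdx hmn i)

/-- nonbasic part of a vector. -/
def restN (hmn : m ≤ n) (v : Fin n → ℝ) : Fin (n - m) → ℝ := fun j => v (nIdx hmn j)

lemma mulVec_split (hmn : m ≤ n) (A : Matrix (Fin m) (Fin n) ℝ) (v : Fin n → ℝ) :
    A *ᵥ v = Bmat hmn A *ᵥ restB hmn v + Nmat hmn A *ᵥ restN hmn v := by
  funext i
  simp only [Pi.add_apply, Matrix.mulVec, dotProduct, Bmat, Nmat, Matrix.of_apply,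
    restB, restN]
  rw [sum_split hmn (f := fun k => A i k * v k)]

lemma BN_def (hmn : m ≤ n) (A : Matrix (Fin m) (Fin n) ℝ) :
    BN hmn A = (Bmat hmn A)⁻¹ * Nmat hmn A := rfl

lemma nullB (hmn : m ≤ n) {A : Matrix (Fin m) (Fin n) ℝ} (hB : IsUnit (Bmat hmn A).det)
    (v : Fin n → ℝ) : A *ᵥ v = 0 ↔ restB hmn v = -(BN hmn A *ᵥ restN hmn v) := by
  constructor
  · intro h0
    rw [mulVec_split hmn A v] at h0
    have h1 : Bmat hmn A *ᵥ restB hmn v = -(Nmat hmn A *ᵥ restN hmn v) :=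
      eq_neg_of_add_eq_zero_left h0
    have h2 := congrArg (fun zz => (Bmat hmn A)⁻¹ *ᵥ zz) h1
    rw [Matrix.mulVec_mulVec, Matrix.nonsing_inv_mul _ hB, Matrix.one_mulVec,
      Matrix.mulVec_neg, Matrix.mulVec_mulVec] at h2
    exact h2
  · intro h1
    rw [mulVec_split hmn A v, h1, BN_def, Matrix.mulVec_neg, Matrix.mulVec_mulVec,
      ← Matrix.mul_assoc, Matrix.mul_nonsing_inv _ hB, Matrix.one_mul]
    exact neg_add_cancel _

/-- Generic core computation: the sharpness infimum in reduced coordinates. -/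
lemma core {a k : ℕ} (M : Matrix (Fin a) (Fin k) ℝ) (σ : Fin k → ℝ) (p : Fin a → ℝ) (C : ℝ)
    (hσ : ∀ j, 0 < σ j) (hp : ∀ i, 0 < p i) (hC : 0 < C) :
    sInf {t | ∃ w : Fin k → ℝ, (∀ j, 0 ≤ w j) ∧ (∀ i, (M *ᵥ w) i ≤ p i) ∧ w ≠ 0 ∧
        t = (∑ j, σ j * w j) / C / Real.sqrt ((∑ i, ((M *ᵥ w) i) ^ 2) + ∑ j, (w j) ^ 2)} =
    (1 / C) * ⨅ j, σ j / Real.sqrt ((∑ i, (M i j) ^ 2) + 1) := by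
  rcases isEmpty_or_nonempty (Fin k) with hk | hk
  · have hempty : {t | ∃ w : Fin k → ℝ, (∀ j, 0 ≤ w j) ∧ (∀ i, (M *ᵥ w) i ≤ p i) ∧ w ≠ 0 ∧
        t = (∑ j, σ j * w j) / C / Real.sqrt ((∑ i, ((M *ᵥ w) i) ^ 2) + ∑ j, (w j) ^ 2)}
        = (∅ : Set ℝ) := by
      ext t
      simp only [Set.mem_setOf_eq, Set.mem_empty_iff_false, iff_false, not_exists]
      rintro w ⟨-, -, hw, -⟩
      exact hw (Subsingleton.elim w 0)
    rw [hempty, Real.sInf_empty, Real.iInf_of_isEmpty, mul_zero]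
  · -- column norms
    set cn : Fin k → ℝ := fun j => Real.sqrt ((∑ i, (M i j) ^ 2) + 1) with hcn_def
    have hcn : ∀ j, 0 < cn j := fun j => Real.sqrt_pos.mpr (by positivity)
    obtain ⟨j₀, hj₀⟩ := Finite.exists_min fun j => σ j / cn j
    have hbdd : BddBelow (Set.range fun j => σ j / cn j) :=
      ⟨σ j₀ / cn j₀, by rintro t ⟨j, rfl⟩; exact hj₀ j⟩
    have hiInf : (⨅ j, σ j / cn j) = σ j₀ / cn j₀ :=
      le_antisymm (ciInf_le hbdd j₀) (le_ciInf hj₀)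
    set r₀ : ℝ := σ j₀ / cn j₀ with hr₀_def
    have hr₀ : 0 < r₀ := div_pos (hσ j₀) (hcn j₀)
    -- the embedding into Euclidean space
    set F : (Fin k → ℝ) → EuclideanSpace ℝ (Fin a ⊕ Fin k) :=
      fun w => (WithLp.equiv 2 (Fin a ⊕ Fin k → ℝ)).symm (Sum.elim (M *ᵥ w) w) with hF_def
    have hFnorm : ∀ w : Fin k → ℝ,
        ‖F w‖ = Real.sqrt ((∑ i, ((M *ᵥ w) i) ^ 2) + ∑ j, (w j) ^ 2) := by
      intro w
      rw [EuclideanSpace.norm_eq, Fintype.sum_sum_type]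
      congr 1
      · congr 1 <;> refine Finset.sum_congr rfl fun x _ => ?_ <;>
          simp [hF_def, WithLp.equiv_symm_apply, PiLp.toLp_apply, Real.norm_eq_abs, sq_abs]
    have hFsmul : ∀ (t : ℝ) (w : Fin k → ℝ), F (t • w) = t • F w := by
      intro t w
      ext x
      cases x with
      | inl i => simp [hF_def, WithLp.equiv_symm_apply, PiLp.toLp_apply, Matrix.mulVec_smul]
      | inr j => simp [hF_def, WithLp.equiv_symm_apply, PiLp.toLp_apply]
    have hFe_norm : ∀ j, ‖F (Pi.single j 1)‖ = cn j := by
      intro j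
      have harg : (∑ i, ((M *ᵥ (Pi.single j 1 : Fin k → ℝ)) i) ^ 2) +
          ∑ j' , ((Pi.single j 1 : Fin k → ℝ) j') ^ 2 = (∑ i, (M i j) ^ 2) + 1 := by
        congr 1
        · refine Finset.sum_congr rfl fun i _ => ?_
          simp [Matrix.mulVec_single]
        · simp [Pi.single_apply, apply_ite (fun x : ℝ => x ^ 2)]
      rw [hFnorm, harg]
    -- decomposition of w as sum of singles
    have hdecomp : ∀ w : Fin k → ℝ, F w = ∑ j, w j • F (Pi.single j 1) := by
      intro w
      have hw : w = ∑ j, w j • (Pi.single j 1 : Fin k → ℝ) := by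
        funext x
        simp [Pi.single_apply, Finset.sum_apply, mul_ite]
      calc F w = F (∑ j, w j • (Pi.single j 1 : Fin k → ℝ)) := by rw [← hw]
        _ = ∑ j, w j • F (Pi.single j 1) := by
            -- F is additive in w
            have hadd : ∀ u v : Fin k → ℝ, F (u + v) = F u + F v := by
              intro u v
              ext x
              cases x with
              | inl i => simp [hF_def, WithLp.equiv_symm_apply, PiLp.toLp_apply, Matrix.mulVec_add]
              | inr j => simp [hF_def, WithLp.equiv_symm_apply, PiLp.toLp_apply]
            have hzero : F 0 = 0 := by
              ext x
              cases x with
              | inl i => simp [hF_def, WithLp.equiv_symm_apply, PiLp.toLp_apply]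
              | inr j => simp [hF_def, WithLp.equiv_symm_apply, PiLp.toLp_apply]
            exact (map_sum (AddMonoidHom.mk' F hadd)
              (fun j => w j • (Pi.single j 1 : Fin k → ℝ)) Finset.univ).trans
              (Finset.sum_congr rfl fun j _ => hFsmul _ _)
    -- key triangle inequality
    have hkey : ∀ w : Fin k → ℝ, (∀ j, 0 ≤ w j) →
        Real.sqrt ((∑ i, ((M *ᵥ w) i) ^ 2) + ∑ j, (w j) ^ 2) ≤ ∑ j, w j * cn j := by
      intro w hw
      rw [← hFnorm, hdecomp]
      calc ‖∑ j, w j • F (Pi.single j 1)‖ ≤ ∑ j, ‖w j • F (Pi.single j 1)‖ :=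
            norm_sum_le _ _
        _ = ∑ j, w j * cn j := by
            refine Finset.sum_congr rfl fun j _ => ?_
            rw [norm_smul, Real.norm_eq_abs, abs_of_nonneg (hw j), hFe_norm]
    -- lower bound for every element of the set
    have hlb : ∀ t ∈ {t | ∃ w : Fin k → ℝ, (∀ j, 0 ≤ w j) ∧ (∀ i, (M *ᵥ w) i ≤ p i) ∧ w ≠ 0 ∧
        t = (∑ j, σ j * w j) / C / Real.sqrt ((∑ i, ((M *ᵥ w) i) ^ 2) + ∑ j, (w j) ^ 2)},
        (1 / C) * r₀ ≤ t := by
      rintro t ⟨w, hw0, -, hwne, rfl⟩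
      set den := Real.sqrt ((∑ i, ((M *ᵥ w) i) ^ 2) + ∑ j, (w j) ^ 2) with hden_def
      have hden_pos : 0 < den := by
        apply Real.sqrt_pos.mpr
        have h1 : 0 ≤ ∑ i, ((M *ᵥ w) i) ^ 2 := by positivity
        have h2 : 0 < ∑ j, (w j) ^ 2 := by
          obtain ⟨j, hj⟩ := Function.ne_iff.mp hwne
          have := Finset.single_le_sum (fun j' (_ : j' ∈ Finset.univ) => sq_nonneg (w j'))
            (Finset.mem_univ j)
          have hj2 : 0 < w j ^ 2 := lt_of_le_of_ne (sq_nonneg _) (Ne.symm (pow_ne_zero 2 hj))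
          linarith
        linarith
      have hnum : r₀ * den ≤ ∑ j, σ j * w j := by
        have h1 : den ≤ ∑ j, w j * cn j := hkey w hw0
        have h2 : r₀ * (∑ j, w j * cn j) ≤ ∑ j, σ j * w j := by
          rw [Finset.mul_sum]
          refine Finset.sum_le_sum fun j _ => ?_
          have h3 : r₀ ≤ σ j / cn j := hj₀ j
          have h4 : r₀ * cn j ≤ σ j := by
            rw [← le_div_iff₀ (hcn j)]; exact h3
          calc r₀ * (w j * cn j) = (r₀ * cn j) * w j := by ring
            _ ≤ σ j * w j := mul_le_mul_of_nonneg_right h4 (hw0 j)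
        calc r₀ * den ≤ r₀ * (∑ j, w j * cn j) :=
              mul_le_mul_of_nonneg_left h1 (le_of_lt hr₀)
          _ ≤ ∑ j, σ j * w j := h2
      rw [div_div]
      rw [le_div_iff₀ (by positivity)]
      calc 1 / C * r₀ * (C * den) = r₀ * den := by field_simp
        _ ≤ ∑ j, σ j * w j := hnum
    -- membership of the value
    have hmem : (1 / C) * r₀ ∈ {t | ∃ w : Fin k → ℝ, (∀ j, 0 ≤ w j) ∧
        (∀ i, (M *ᵥ w) i ≤ p i) ∧ w ≠ 0 ∧
        t = (∑ j, σ j * w j) / C / Real.sqrt ((∑ i, ((M *ᵥ w) i) ^ 2) + ∑ j, (w j) ^ 2)} := by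
      -- choose a small multiple of the j₀-th unit vector
      have hε : ∃ ε : ℝ, 0 < ε ∧ ∀ i, ε * M i j₀ ≤ p i := by
        rcases isEmpty_or_nonempty (Fin a) with ha | ha
        · exact ⟨1, one_pos, fun i => (IsEmpty.false i).elim⟩
        · refine ⟨Finset.univ.inf' Finset.univ_nonempty (fun i => p i / (|M i j₀| + 1)),
            ?_, ?_⟩
          · rw [Finset.lt_inf'_iff]
            intro i _
            exact div_pos (hp i) (by positivity)
          · intro i
            have h1 : Finset.univ.inf' Finset.univ_nonempty (fun i => p i / (|M i j₀| + 1))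
                ≤ p i / (|M i j₀| + 1) := Finset.inf'_le _ (Finset.mem_univ i)
            have h2 : 0 < |M i j₀| + 1 := by positivity
            have h3 : 0 < Finset.univ.inf' Finset.univ_nonempty
                (fun i => p i / (|M i j₀| + 1)) := by
              rw [Finset.lt_inf'_iff]; intro i _; exact div_pos (hp i) (by positivity)
            calc Finset.univ.inf' Finset.univ_nonempty (fun i => p i / (|M i j₀| + 1)) * M i j₀
                ≤ Finset.univ.inf' Finset.univ_nonempty (fun i => p i / (|M i j₀| + 1)) *
                  (|M i j₀| + 1) := by
                  apply mul_le_mul_of_nonneg_left _ (le_of_lt h3)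
                  have := le_abs_self (M i j₀); linarith
              _ ≤ p i / (|M i j₀| + 1) * (|M i j₀| + 1) :=
                  mul_le_mul_of_nonneg_right h1 (le_of_lt h2)
              _ = p i := by field_simp
      obtain ⟨ε, hε_pos, hε_le⟩ := hε
      refine ⟨ε • (Pi.single j₀ 1 : Fin k → ℝ), ?_, ?_, ?_, ?_⟩
      · intro j
        simp only [Pi.smul_apply, smul_eq_mul]
        have : (0:ℝ) ≤ (Pi.single j₀ 1 : Fin k → ℝ) j := by
          rw [Pi.single_apply]; split <;> norm_num
        positivity
      · intro i
        rw [Matrix.mulVec_smul]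
        simp only [Pi.smul_apply, smul_eq_mul]
        rw [Matrix.mulVec_single]
        simpa using hε_le i
      · intro hcontra
        have := congrFun hcontra j₀
        simp [Pi.single_apply] at this
        exact ne_of_gt hε_pos this
      · have hnum : (∑ j, σ j * (ε • (Pi.single j₀ 1 : Fin k → ℝ)) j) = ε * σ j₀ := by
          have h5 : ∀ j, σ j * (ε • (Pi.single j₀ 1 : Fin k → ℝ)) j
              = if j = j₀ then ε * σ j₀ else 0 := by
            intro j
            by_cases hj : j = j₀ <;>
              simp [hj, Pi.single_apply, Pi.smul_apply] <;> ring
          rw [Finset.sum_congr rfl fun j _ => h5 j]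
          simp
        have hden : Real.sqrt ((∑ i, ((M *ᵥ (ε • (Pi.single j₀ 1 : Fin k → ℝ))) i) ^ 2) +
            ∑ j, ((ε • (Pi.single j₀ 1 : Fin k → ℝ)) j) ^ 2) = ε * cn j₀ := by
          rw [← hFnorm, hFsmul, norm_smul, Real.norm_eq_abs, abs_of_pos hε_pos, hFe_norm]
        rw [hnum, hden]
        rw [hr₀_def]
        field_simp
    rw [hiInf]
    exact le_antisymm (csInf_le ⟨(1 / C) * r₀, hlb⟩ hmem) (le_csInf ⟨_, hmem⟩ hlb)


lemma edist_level {N : ℕ} (V : Set (Fin N → ℝ)) (g u ustar s' : Fin N → ℝ)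
    (hu : u ∈ V) (hustar : ustar ∈ V)
    (hsub : ∀ v ∈ V, ∀ t : ℝ, v - t • s' ∈ V)
    (hg : ∀ v ∈ V, g ⬝ᵥ (u - v) = s' ⬝ᵥ (u - v))
    (hs' : s' ≠ 0) (hnn : 0 ≤ s' ⬝ᵥ (u - ustar)) :
    edistSet u (V ∩ {v | g ⬝ᵥ v = g ⬝ᵥ ustar}) = s' ⬝ᵥ (u - ustar) / enorm s' := by
  set D := s' ⬝ᵥ (u - ustar) with hD_def
  have hsn : 0 < enorm s' := enorm_pos hs'
  have hss : s' ⬝ᵥ s' = enorm s' ^ 2 := by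
    rw [enorm_sq_eq]; simp [dotProduct, sq]
  have hgD : g ⬝ᵥ u - g ⬝ᵥ ustar = D := by
    have := hg ustar hustar
    rwa [dotProduct_sub] at this
  -- lower bound
  have hlow : ∀ d ∈ {d | ∃ v ∈ V ∩ {v | g ⬝ᵥ v = g ⬝ᵥ ustar}, d = enorm (u - v)},
      D / enorm s' ≤ d := by
    rintro d ⟨v, ⟨hvV, hvl⟩, rfl⟩
    have h1 : s' ⬝ᵥ (u - v) = D := by
      have h2 := hg v hvV
      simp only [dotProduct_sub] at h2 ⊢
      have h3 : g ⬝ᵥ v = g ⬝ᵥ ustar := hvl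
      linarith
    have h2 : D ≤ enorm s' * enorm (u - v) := h1 ▸ dot_le_enorm s' (u - v)
    rw [div_le_iff₀ hsn]
    linarith [h2]
  -- the minimizing point
  set t₀ : ℝ := D / (enorm s' ^ 2) with ht₀_def
  have ht₀_nn : 0 ≤ t₀ := div_nonneg hnn (by positivity)
  set v₀ := u - t₀ • s' with hv₀_def
  have hv₀V : v₀ ∈ V := hsub u hu t₀
  have huv₀ : u - v₀ = t₀ • s' := by rw [hv₀_def]; abel
  have hdot₀ : s' ⬝ᵥ (u - v₀) = D := by
    rw [huv₀, dotProduct_smul, smul_eq_mul, hss, ht₀_def]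
    field_simp
  have hlevel : g ⬝ᵥ v₀ = g ⬝ᵥ ustar := by
    have h4 := hg v₀ hv₀V
    have h5 := hdot₀
    simp only [dotProduct_sub] at h4 h5
    linarith
  have hdist : enorm (u - v₀) = D / enorm s' := by
    rw [huv₀, enorm_smul, abs_of_nonneg ht₀_nn, ht₀_def]
    field_simp
  have hmem : D / enorm s' ∈ {d | ∃ v ∈ V ∩ {v | g ⬝ᵥ v = g ⬝ᵥ ustar}, d = enorm (u - v)} :=
    ⟨v₀, ⟨hv₀V, hlevel⟩, hdist.symm⟩
  exact le_antisymm (csInf_le ⟨D / enorm s', hlow⟩ hmem) (le_csInf ⟨_, hmem⟩ hlow)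


end Aux

/-- proof of Lemma 13 of the paper. Under the unique-optimum
assumption, the LP sharpness of the primal and dual slack problems have the closed forms
`μ_p = (1/‖P_{Null(A)}(c)‖)·min_j s*_{m+j}/√(‖(B⁻¹N)_{·,j}‖²+1)` and
`μ_d = (1/‖q‖)·min_i x*_i/√(‖(B⁻¹N)_{i,·}‖²+1)`.  Here the orthogonal projection of `c`
onto `Null(A)` is written in the closed form `c - Aᵀ(AAᵀ)⁻¹Ac`, valid since the rows of
`A` are linearly independent. -/
theorem mu_p_mu_d_closed_form (m n : ℕ) (hmn : m ≤ n)
    (A : Matrix (Fin m) (Fin n) ℝ) (b : Fin m → ℝ) (c : Fin n → ℝ)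
    (xstar : Fin n → ℝ) (ystar : Fin m → ℝ) (sstar : Fin n → ℝ)
    (h : UniqueOpt hmn A b c xstar ystar sstar) :
    genMu (Vp A b) c xstar =
      (1 / enorm (c - Aᵀ *ᵥ ((A * Aᵀ)⁻¹ *ᵥ (A *ᵥ c)))) *
        ⨅ j : Fin (n - m), sstar (nIdx hmn j) / Real.sqrt ((∑ i, (BN hmn A i j) ^ 2) + 1) ∧
    genMu (Vd A c) (qvec A b) sstar =
      (1 / enorm (qvec A b)) *
        ⨅ i : Fin m, xstar (bIdx hmn i) / Real.sqrt ((∑ j, (BN hmn A i j) ^ 2) + 1) := by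
  classical
  have hB := h.basis_isUnit
  have hBt : IsUnit ((Bmat hmn A)ᵀ).det := by rwa [Matrix.det_transpose]
  -- `A * Aᵀ` is invertible
  have hAAt_det : IsUnit (A * Aᵀ).det := by
    rw [← Matrix.isUnit_iff_isUnit_det, ← Matrix.mulVec_injective_iff_isUnit]
    intro x y hxy
    have hd : (A * Aᵀ) *ᵥ (x - y) = 0 := by rw [Matrix.mulVec_sub, hxy, sub_self]
    have he : Aᵀ *ᵥ (x - y) = 0 := by
      have h1 : (x - y) ⬝ᵥ ((A * Aᵀ) *ᵥ (x - y)) = 0 := by rw [hd, dotProduct_zero]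
      have h2 : (x - y) ⬝ᵥ ((A * Aᵀ) *ᵥ (x - y))
          = (Aᵀ *ᵥ (x - y)) ⬝ᵥ (Aᵀ *ᵥ (x - y)) := by
        rw [← Matrix.mulVec_mulVec, Matrix.dotProduct_mulVec, ← Matrix.mulVec_transpose]
      have h3 : ∑ i, ((Aᵀ *ᵥ (x - y)) i) ^ 2 = 0 := by
        have h4 := h1
        rw [h2] at h4
        simpa [dotProduct, sq] using h4
      funext i
      have h4 := (Finset.sum_eq_zero_iff_of_nonneg
        (fun i _ => sq_nonneg ((Aᵀ *ᵥ (x - y)) i))).mp h3 i (Finset.mem_univ i)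
      exact pow_eq_zero_iff two_ne_zero |>.mp h4
    have h5 : (Bmat hmn A)ᵀ *ᵥ (x - y) = 0 := by
      funext i
      have h6 := congrFun he (bIdx hmn i)
      simpa [Matrix.mulVec, dotProduct, Matrix.transpose_apply, Bmat,
        Matrix.of_apply] using h6
    have h7 := congrArg (fun zz => ((Bmat hmn A)ᵀ)⁻¹ *ᵥ zz) h5
    rw [Matrix.mulVec_mulVec, Matrix.nonsing_inv_mul _ hBt, Matrix.one_mulVec,
      Matrix.mulVec_zero] at h7
    exact sub_eq_zero.mp h7
  have hAq : A *ᵥ qvec A b = b := by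
    show A *ᵥ (Aᵀ *ᵥ ((A * Aᵀ)⁻¹ *ᵥ b)) = b
    calc A *ᵥ (Aᵀ *ᵥ ((A * Aᵀ)⁻¹ *ᵥ b))
        = (A * Aᵀ) *ᵥ ((A * Aᵀ)⁻¹ *ᵥ b) := Matrix.mulVec_mulVec _ _ _
      _ = ((A * Aᵀ) * (A * Aᵀ)⁻¹) *ᵥ b := Matrix.mulVec_mulVec _ _ _
      _ = b := by rw [Matrix.mul_nonsing_inv _ hAAt_det, Matrix.one_mulVec]
  have hAx : A *ᵥ xstar = b := h.primal_feas.1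
  have hxnn : ∀ i, 0 ≤ xstar i := h.primal_feas.2
  have hsnn : ∀ i, 0 ≤ sstar i := h.dual_feas.2
  have hxN : ∀ j, xstar (nIdx hmn j) = 0 := by
    intro j
    have h1 : ¬ 0 < xstar (nIdx hmn j) := by rw [h.xstar_supp]; simp [nIdx]
    exact le_antisymm (not_lt.mp h1) (hxnn _)
  have hsB : ∀ i, sstar (bIdx hmn i) = 0 := by
    intro i
    have h1 : ¬ 0 < sstar (bIdx hmn i) := by
      rw [h.sstar_supp]
      simpa [bIdx] using i.isLt
    exact le_antisymm (not_lt.mp h1) (hsnn _)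
  have hxB : ∀ i, 0 < xstar (bIdx hmn i) :=
    fun i => (h.xstar_supp _).mpr (by simpa [bIdx] using i.isLt)
  have hsN : ∀ j, 0 < sstar (nIdx hmn j) :=
    fun j => (h.sstar_supp _).mpr (by simp [nIdx])
  set s' : Fin n → ℝ := c - Aᵀ *ᵥ ((A * Aᵀ)⁻¹ *ᵥ (A *ᵥ c)) with hs'_def
  have hAs' : A *ᵥ s' = 0 := by
    have h1 : A *ᵥ (Aᵀ *ᵥ ((A * Aᵀ)⁻¹ *ᵥ (A *ᵥ c))) = A *ᵥ c :=
      calc A *ᵥ (Aᵀ *ᵥ ((A * Aᵀ)⁻¹ *ᵥ (A *ᵥ c)))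
          = (A * Aᵀ) *ᵥ ((A * Aᵀ)⁻¹ *ᵥ (A *ᵥ c)) := Matrix.mulVec_mulVec _ _ _
        _ = ((A * Aᵀ) * (A * Aᵀ)⁻¹) *ᵥ (A *ᵥ c) := Matrix.mulVec_mulVec _ _ _
        _ = A *ᵥ c := by rw [Matrix.mul_nonsing_inv _ hAAt_det, Matrix.one_mulVec]
    rw [hs'_def, Matrix.mulVec_sub, h1, sub_self]
  have horth : ∀ dv : Fin n → ℝ, A *ᵥ dv = 0 → c ⬝ᵥ dv = s' ⬝ᵥ dv := by
    intro dv h0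
    rw [hs'_def, sub_dotProduct]
    have h1 : (Aᵀ *ᵥ ((A * Aᵀ)⁻¹ *ᵥ (A *ᵥ c))) ⬝ᵥ dv = 0 := by
      rw [Matrix.mulVec_transpose, ← Matrix.dotProduct_mulVec, h0, dotProduct_zero]
    rw [h1, sub_zero]
  have hcs : ∀ dv : Fin n → ℝ, A *ᵥ dv = 0 →
      c ⬝ᵥ dv = ∑ j, sstar (nIdx hmn j) * restN hmn dv j := by
    intro dv h0
    have h1 : c ⬝ᵥ dv = (Aᵀ *ᵥ ystar) ⬝ᵥ dv + sstar ⬝ᵥ dv := by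
      rw [← add_dotProduct, h.dual_feas.1]
    have h2 : (Aᵀ *ᵥ ystar) ⬝ᵥ dv = 0 := by
      rw [Matrix.mulVec_transpose, ← Matrix.dotProduct_mulVec, h0, dotProduct_zero]
    rw [h1, h2, zero_add]
    show ∑ i, sstar i * dv i = _
    rw [sum_split hmn (f := fun i => sstar i * dv i),
      Finset.sum_eq_zero (fun i _ => by rw [hsB i, zero_mul]), zero_add]
    rfl
  have hxVp : xstar ∈ Vp A b :=
    ⟨xstar - qvec A b, by rw [Matrix.mulVec_sub, hAx, hAq, sub_self], by abel⟩
  have hVpA : ∀ u ∈ Vp A b, A *ᵥ (u - xstar) = 0 := by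
    rintro u ⟨v, hv, rfl⟩
    rw [show qvec A b + v - xstar = v - (xstar - qvec A b) by abel, Matrix.mulVec_sub, hv,
      Matrix.mulVec_sub, hAx, hAq, sub_self, zero_sub, neg_zero]
  have hVpmem : ∀ d : Fin n → ℝ, A *ᵥ d = 0 → xstar + d ∈ Vp A b := by
    intro d hd
    exact ⟨xstar - qvec A b + d, by
      rw [Matrix.mulVec_add, Matrix.mulVec_sub, hAx, hAq, hd, sub_self, add_zero], by abel⟩
  constructor
  · -- primal sharpness
    rcases isEmpty_or_nonempty (Fin (n - m)) with hk | hk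
    · have hset : {t | ∃ u, u ∈ Vp A b ∧ (∀ i, 0 ≤ u i) ∧ u ≠ xstar ∧
          t = edistSet u (Vp A b ∩ {v | c ⬝ᵥ v = c ⬝ᵥ xstar}) / enorm (u - xstar)}
          = (∅ : Set ℝ) := by
        ext t
        simp only [Set.mem_setOf_eq, Set.mem_empty_iff_false, iff_false, not_exists]
        rintro u ⟨huV, -, hune, -⟩
        apply hune
        have h0 := hVpA u huV
        have h1 := (nullB hmn hB _).mp h0
        have h2 : restN hmn (u - xstar) = 0 := Subsingleton.elim _ _
        rw [h2, Matrix.mulVec_zero, neg_zero] at h1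
        have h3 : u - xstar = 0 :=
          ext_split hmn (fun i => congrFun h1 i) (fun j => congrFun h2 j)
        exact sub_eq_zero.mp h3
      unfold genMu
      rw [hset, Real.sInf_empty, Real.iInf_of_isEmpty, mul_zero]
    · obtain ⟨j₁⟩ := hk
      have hrB₁ : restB hmn (glue hmn (-(BN hmn A *ᵥ (Pi.single j₁ 1))) (Pi.single j₁ 1))
          = -(BN hmn A *ᵥ (Pi.single j₁ 1)) := funext fun i => glue_b hmn _ _ i
      have hrN₁ : restN hmn (glue hmn (-(BN hmn A *ᵥ (Pi.single j₁ 1))) (Pi.single j₁ 1))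
          = Pi.single j₁ 1 := funext fun j => glue_n hmn _ _ j
      have hAd₁ : A *ᵥ (glue hmn (-(BN hmn A *ᵥ (Pi.single j₁ 1))) (Pi.single j₁ 1)) = 0 :=
        (nullB hmn hB _).mpr (by rw [hrB₁, hrN₁])
      have hs'd₁ : s' ⬝ᵥ (glue hmn (-(BN hmn A *ᵥ (Pi.single j₁ 1))) (Pi.single j₁ 1))
          = sstar (nIdx hmn j₁) := by
        rw [← horth _ hAd₁, hcs _ hAd₁, hrN₁]
        have h5 : ∀ j, sstar (nIdx hmn j) * (Pi.single j₁ 1 : Fin (n - m) → ℝ) j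
            = if j = j₁ then sstar (nIdx hmn j₁) else 0 := by
          intro j
          by_cases hj : j = j₁ <;> simp [hj, Pi.single_apply]
        rw [Finset.sum_congr rfl fun j _ => h5 j]
        simp
      have hs'ne : s' ≠ 0 := by
        intro h0
        rw [h0, zero_dotProduct] at hs'd₁
        exact absurd hs'd₁.symm (ne_of_gt (hsN j₁))
      have hC : 0 < enorm s' := enorm_pos hs'ne
      have hval : ∀ u, u ∈ Vp A b → (∀ i, 0 ≤ u i) →
          edistSet u (Vp A b ∩ {v | c ⬝ᵥ v = c ⬝ᵥ xstar}) / enorm (u - xstar) =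
          (∑ j, sstar (nIdx hmn j) * restN hmn (u - xstar) j) / enorm s' /
            Real.sqrt ((∑ i, ((BN hmn A *ᵥ restN hmn (u - xstar)) i) ^ 2) +
              ∑ j, (restN hmn (u - xstar) j) ^ 2) := by
        intro u huV hupos
        have h0 := hVpA u huV
        have hrB : restB hmn (u - xstar) = -(BN hmn A *ᵥ restN hmn (u - xstar)) :=
          (nullB hmn hB _).mp h0
        have hwnn : ∀ j, 0 ≤ restN hmn (u - xstar) j := by
          intro j
          have h2 : restN hmn (u - xstar) j = u (nIdx hmn j) := by
            simp [restN, Pi.sub_apply, hxN j]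
          rw [h2]; exact hupos _
        have hnn : 0 ≤ s' ⬝ᵥ (u - xstar) := by
          rw [← horth _ h0, hcs _ h0]
          exact Finset.sum_nonneg fun j _ => mul_nonneg (hsN j).le (hwnn j)
        have hdist := edist_level (Vp A b) c u xstar s' huV hxVp
          (by rintro v ⟨v₁, hv₁, rfl⟩ t
              exact ⟨v₁ - t • s', by
                rw [Matrix.mulVec_sub, hv₁, Matrix.mulVec_smul, hAs', smul_zero, sub_zero],
                by abel⟩)
          (fun v hv => horth _ (by
              have h1 := hVpA v hv
              rw [show u - v = (u - xstar) - (v - xstar) by abel, Matrix.mulVec_sub, h0, h1,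
                sub_self]))
          hs'ne hnn
        rw [hdist]
        have hnum : s' ⬝ᵥ (u - xstar) = ∑ j, sstar (nIdx hmn j) * restN hmn (u - xstar) j := by
          rw [← horth _ h0, hcs _ h0]
        have hden : enorm (u - xstar) =
            Real.sqrt ((∑ i, ((BN hmn A *ᵥ restN hmn (u - xstar)) i) ^ 2) +
              ∑ j, (restN hmn (u - xstar) j) ^ 2) := by
          unfold enorm
          congr 1
          rw [sum_split hmn (f := fun i => ((u - xstar) i) ^ 2)]
          congr 1
          · refine Finset.sum_congr rfl fun i _ => ?_
            have h2 := congrFun hrB i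
            simp only [restB] at h2
            rw [h2, Pi.neg_apply, neg_sq]
        rw [hnum, hden]
      have hseteq : {t | ∃ u, u ∈ Vp A b ∧ (∀ i, 0 ≤ u i) ∧ u ≠ xstar ∧
            t = edistSet u (Vp A b ∩ {v | c ⬝ᵥ v = c ⬝ᵥ xstar}) / enorm (u - xstar)} =
          {t | ∃ w : Fin (n - m) → ℝ, (∀ j, 0 ≤ w j) ∧
            (∀ i, (BN hmn A *ᵥ w) i ≤ xstar (bIdx hmn i)) ∧ w ≠ 0 ∧
            t = (∑ j, sstar (nIdx hmn j) * w j) / enorm s' /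
              Real.sqrt ((∑ i, ((BN hmn A *ᵥ w) i) ^ 2) + ∑ j, (w j) ^ 2)} := by
        ext t
        simp only [Set.mem_setOf_eq]
        constructor
        · rintro ⟨u, huV, hupos, hune, rfl⟩
          have h0 := hVpA u huV
          have hrB := (nullB hmn hB _).mp h0
          refine ⟨restN hmn (u - xstar), ?_, ?_, ?_, hval u huV hupos⟩
          · intro j
            have h2 : restN hmn (u - xstar) j = u (nIdx hmn j) := by
              simp [restN, Pi.sub_apply, hxN j]
            rw [h2]; exact hupos _
          · intro i
            have h2 := congrFun hrB i
            simp only [restB, Pi.sub_apply, Pi.neg_apply] at h2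
            have h3 := hupos (bIdx hmn i)
            linarith
          · intro hw0
            apply hune
            rw [hw0, Matrix.mulVec_zero, neg_zero] at hrB
            have h3 : u - xstar = 0 :=
              ext_split hmn (fun i => congrFun hrB i) (fun j => congrFun hw0 j)
            exact sub_eq_zero.mp h3
        · rintro ⟨w, hw0, hwle, hwne, rfl⟩
          have hrBd : restB hmn (glue hmn (-(BN hmn A *ᵥ w)) w) = -(BN hmn A *ᵥ w) :=
            funext fun i => glue_b hmn _ _ i
          have hrNd : restN hmn (glue hmn (-(BN hmn A *ᵥ w)) w) = w :=
            funext fun j => glue_n hmn _ _ j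
          have hAd : A *ᵥ (glue hmn (-(BN hmn A *ᵥ w)) w) = 0 :=
            (nullB hmn hB _).mpr (by rw [hrBd, hrNd])
          have husub : xstar + glue hmn (-(BN hmn A *ᵥ w)) w - xstar
              = glue hmn (-(BN hmn A *ᵥ w)) w := by abel
          have hupos : ∀ i, 0 ≤ (xstar + glue hmn (-(BN hmn A *ᵥ w)) w) i := by
            refine forall_split hmn (fun i => ?_) (fun j => ?_)
            · simp only [Pi.add_apply]
              have h2 : glue hmn (-(BN hmn A *ᵥ w)) w (bIdx hmn i) = -((BN hmn A *ᵥ w) i) :=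
                glue_b hmn _ _ i
              rw [h2]
              have := hwle i
              linarith
            · simp only [Pi.add_apply]
              have h2 : glue hmn (-(BN hmn A *ᵥ w)) w (nIdx hmn j) = w j :=
                glue_n hmn _ _ j
              rw [hxN j, h2, zero_add]
              exact hw0 j
          have hune : xstar + glue hmn (-(BN hmn A *ᵥ w)) w ≠ xstar := by
            intro heq
            apply hwne
            have h4 : xstar + glue hmn (-(BN hmn A *ᵥ w)) w - xstar = xstar - xstar := by
              rw [heq]
            rw [husub, sub_self] at h4
            rw [← hrNd, h4]
            rfl
          refine ⟨xstar + glue hmn (-(BN hmn A *ᵥ w)) w, hVpmem _ hAd, hupos, hune, ?_⟩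
          rw [hval _ (hVpmem _ hAd) hupos, husub, hrNd]
      unfold genMu
      rw [hseteq, core (BN hmn A) (fun j => sstar (nIdx hmn j)) (fun i => xstar (bIdx hmn i))
        (enorm s') hsN hxB hC]
  · -- dual sharpness
    rcases isEmpty_or_nonempty (Fin m) with hm | hm
    · have hAty : ∀ y : Fin m → ℝ, Aᵀ *ᵥ y = 0 := by
        intro y; funext x
        simp [Matrix.mulVec, dotProduct, Finset.univ_eq_empty]
      have hset : {t | ∃ u, u ∈ Vd A c ∧ (∀ i, 0 ≤ u i) ∧ u ≠ sstar ∧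
          t = edistSet u (Vd A c ∩ {v | qvec A b ⬝ᵥ v = qvec A b ⬝ᵥ sstar})
            / enorm (u - sstar)} = (∅ : Set ℝ) := by
        ext t
        simp only [Set.mem_setOf_eq, Set.mem_empty_iff_false, iff_false, not_exists]
        rintro u ⟨⟨y, rfl⟩, -, hune, -⟩
        apply hune
        have hsc : sstar = c := by
          have h1 := h.dual_feas.1
          rwa [hAty, zero_add] at h1
        rw [hAty y, add_zero, hsc]
      unfold genMu
      rw [hset, Real.sInf_empty, Real.iInf_of_isEmpty, mul_zero]
    · obtain ⟨i₁⟩ := hm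
      have hqne : qvec A b ≠ 0 := by
        intro h0
        have hb0 : b = 0 := by rw [← hAq, h0, Matrix.mulVec_zero]
        have hx0 : A *ᵥ xstar = 0 := by rw [hAx, hb0]
        have h1 := (nullB hmn hB _).mp hx0
        have h2 : restN hmn xstar = 0 := funext fun j => hxN j
        rw [h2, Matrix.mulVec_zero, neg_zero] at h1
        exact absurd (congrFun h1 i₁) (ne_of_gt (hxB i₁))
      have hCq : 0 < enorm (qvec A b) := enorm_pos hqne
      have hsVd : sstar ∈ Vd A c := ⟨-ystar, by
        rw [Matrix.mulVec_neg, ← h.dual_feas.1]; abel⟩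
      have hdchar : ∀ z : Fin m → ℝ, restB hmn (Aᵀ *ᵥ z) = (Bmat hmn A)ᵀ *ᵥ z := by
        intro z; funext i
        simp [restB, Matrix.mulVec, dotProduct, Matrix.transpose_apply, Bmat,
          Matrix.of_apply]
      have hnchar : ∀ z : Fin m → ℝ, restN hmn (Aᵀ *ᵥ z) = (Nmat hmn A)ᵀ *ᵥ z := by
        intro z; funext j
        simp [restN, Matrix.mulVec, dotProduct, Matrix.transpose_apply, Nmat,
          Matrix.of_apply]
      have hMT : ∀ z : Fin m → ℝ,
          restN hmn (Aᵀ *ᵥ z) = (BN hmn A)ᵀ *ᵥ restB hmn (Aᵀ *ᵥ z) := by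
        intro z
        rw [hnchar z, hdchar z, Matrix.mulVec_mulVec]
        have h1 : (BN hmn A)ᵀ * (Bmat hmn A)ᵀ = (Nmat hmn A)ᵀ := by
          rw [← Matrix.transpose_mul, BN_def, ← Matrix.mul_assoc,
            Matrix.mul_nonsing_inv _ hB, Matrix.one_mul]
        rw [h1]
      have hbuild : ∀ wB : Fin m → ℝ,
          glue hmn wB ((BN hmn A)ᵀ *ᵥ wB) = Aᵀ *ᵥ (((Bmat hmn A)ᵀ)⁻¹ *ᵥ wB) := by
        intro wB
        have h1 : restB hmn (Aᵀ *ᵥ (((Bmat hmn A)ᵀ)⁻¹ *ᵥ wB)) = wB := by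
          rw [hdchar, Matrix.mulVec_mulVec, Matrix.mul_nonsing_inv _ hBt, Matrix.one_mulVec]
        have h2 : restN hmn (Aᵀ *ᵥ (((Bmat hmn A)ᵀ)⁻¹ *ᵥ wB)) = (BN hmn A)ᵀ *ᵥ wB := by
          rw [hMT, h1]
        symm
        refine ext_split hmn (fun i => ?_) (fun j => ?_)
        · exact (congrFun h1 i).trans (glue_b hmn _ _ i).symm
        · exact (congrFun h2 j).trans (glue_n hmn _ _ j).symm
      have hqdot : ∀ dv : Fin n → ℝ, (∃ z, dv = Aᵀ *ᵥ z) →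
          qvec A b ⬝ᵥ dv = ∑ i, xstar (bIdx hmn i) * restB hmn dv i := by
        rintro dv ⟨z, rfl⟩
        have h1 : (qvec A b - xstar) ⬝ᵥ (Aᵀ *ᵥ z) = 0 := by
          rw [Matrix.dotProduct_mulVec, Matrix.vecMul_transpose, Matrix.mulVec_sub, hAq, hAx,
            sub_self, zero_dotProduct]
        have h2 : qvec A b ⬝ᵥ (Aᵀ *ᵥ z) = xstar ⬝ᵥ (Aᵀ *ᵥ z) := by
          rw [sub_dotProduct] at h1; linarith
        rw [h2]
        show ∑ i, xstar i * (Aᵀ *ᵥ z) i = _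
        rw [sum_split hmn (f := fun i => xstar i * (Aᵀ *ᵥ z) i)]
        have hz : ∑ j : Fin (n - m), xstar (nIdx hmn j) * (Aᵀ *ᵥ z) (nIdx hmn j) = 0 :=
          Finset.sum_eq_zero fun j _ => by rw [hxN j, zero_mul]
        rw [hz, add_zero]
        rfl
      have hvald : ∀ u, u ∈ Vd A c → (∀ i, 0 ≤ u i) →
          edistSet u (Vd A c ∩ {v | qvec A b ⬝ᵥ v = qvec A b ⬝ᵥ sstar}) / enorm (u - sstar) =
          (∑ i, xstar (bIdx hmn i) * restB hmn (u - sstar) i) / enorm (qvec A b) /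
            Real.sqrt ((∑ j, (((-((BN hmn A)ᵀ)) *ᵥ restB hmn (u - sstar)) j) ^ 2) +
              ∑ i, (restB hmn (u - sstar) i) ^ 2) := by
        intro u huV hupos
        obtain ⟨y, hy⟩ := huV
        have hδ : u - sstar = Aᵀ *ᵥ (y + ystar) := by
          rw [hy, Matrix.mulVec_add, ← h.dual_feas.1]; abel
        have hEx : ∃ z, u - sstar = Aᵀ *ᵥ z := ⟨y + ystar, hδ⟩
        have hδchar : restN hmn (u - sstar) = (BN hmn A)ᵀ *ᵥ restB hmn (u - sstar) := by
          rw [hδ]; exact hMT _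
        have hwnn : ∀ i, 0 ≤ restB hmn (u - sstar) i := by
          intro i
          have h2 : restB hmn (u - sstar) i = u (bIdx hmn i) := by
            simp [restB, Pi.sub_apply, hsB i]
          rw [h2]; exact hupos _
        have hnn : 0 ≤ qvec A b ⬝ᵥ (u - sstar) := by
          rw [hqdot _ hEx]
          exact Finset.sum_nonneg fun i _ => mul_nonneg (hxB i).le (hwnn i)
        have hdist := edist_level (Vd A c) (qvec A b) u sstar (qvec A b) ⟨y, hy⟩ hsVd
          (by rintro v ⟨y₁, rfl⟩ t
              refine ⟨y₁ - t • ((A * Aᵀ)⁻¹ *ᵥ b), ?_⟩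
              rw [Matrix.mulVec_sub, Matrix.mulVec_smul]
              show c + Aᵀ *ᵥ y₁ - t • qvec A b
                = c + (Aᵀ *ᵥ y₁ - t • (Aᵀ *ᵥ ((A * Aᵀ)⁻¹ *ᵥ b)))
              abel)
          (fun v _ => rfl)
          hqne hnn
        rw [hdist, hqdot _ hEx]
        have hden : enorm (u - sstar) =
            Real.sqrt ((∑ j, (((-((BN hmn A)ᵀ)) *ᵥ restB hmn (u - sstar)) j) ^ 2) +
              ∑ i, (restB hmn (u - sstar) i) ^ 2) := by
          unfold enorm
          congr 1
          rw [sum_split hmn (f := fun i => ((u - sstar) i) ^ 2), add_comm]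
          congr 1
          · refine Finset.sum_congr rfl fun j _ => ?_
            have h2 := congrFun hδchar j
            simp only [restN] at h2
            rw [h2, Matrix.neg_mulVec, Pi.neg_apply, neg_sq]
        rw [hden]
      have hseteqd : {t | ∃ u, u ∈ Vd A c ∧ (∀ i, 0 ≤ u i) ∧ u ≠ sstar ∧
            t = edistSet u (Vd A c ∩ {v | qvec A b ⬝ᵥ v = qvec A b ⬝ᵥ sstar})
              / enorm (u - sstar)} =
          {t | ∃ w : Fin m → ℝ, (∀ i, 0 ≤ w i) ∧
            (∀ j, ((-((BN hmn A)ᵀ)) *ᵥ w) j ≤ sstar (nIdx hmn j)) ∧ w ≠ 0 ∧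
            t = (∑ i, xstar (bIdx hmn i) * w i) / enorm (qvec A b) /
              Real.sqrt ((∑ j, (((-((BN hmn A)ᵀ)) *ᵥ w) j) ^ 2) + ∑ i, (w i) ^ 2)} := by
        ext t
        simp only [Set.mem_setOf_eq]
        constructor
        · rintro ⟨u, huV, hupos, hune, rfl⟩
          obtain ⟨y, hy⟩ := huV
          have hδ : u - sstar = Aᵀ *ᵥ (y + ystar) := by
            rw [hy, Matrix.mulVec_add, ← h.dual_feas.1]; abel
          have hδchar : restN hmn (u - sstar) = (BN hmn A)ᵀ *ᵥ restB hmn (u - sstar) := by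
            rw [hδ]; exact hMT _
          refine ⟨restB hmn (u - sstar), ?_, ?_, ?_, hvald u ⟨y, hy⟩ hupos⟩
          · intro i
            have h2 : restB hmn (u - sstar) i = u (bIdx hmn i) := by
              simp [restB, Pi.sub_apply, hsB i]
            rw [h2]; exact hupos _
          · intro j
            have h2 := congrFun hδchar j
            simp only [restN, Pi.sub_apply] at h2
            have h3 := hupos (nIdx hmn j)
            rw [Matrix.neg_mulVec, Pi.neg_apply]
            linarith
          · intro hw0
            apply hune
            have h2 : restN hmn (u - sstar) = 0 := by
              rw [hδchar, hw0, Matrix.mulVec_zero]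
            have h3 : u - sstar = 0 :=
              ext_split hmn (fun i => congrFun hw0 i) (fun j => congrFun h2 j)
            exact sub_eq_zero.mp h3
        · rintro ⟨w, hw0, hwle, hwne, rfl⟩
          have hb1 : restB hmn (glue hmn w ((BN hmn A)ᵀ *ᵥ w)) = w :=
            funext fun i => glue_b hmn _ _ i
          have hb2 : restN hmn (glue hmn w ((BN hmn A)ᵀ *ᵥ w)) = (BN hmn A)ᵀ *ᵥ w :=
            funext fun j => glue_n hmn _ _ j
          have hmemd : sstar + glue hmn w ((BN hmn A)ᵀ *ᵥ w) ∈ Vd A c := by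
            refine ⟨-ystar + ((Bmat hmn A)ᵀ)⁻¹ *ᵥ w, ?_⟩
            rw [Matrix.mulVec_add, Matrix.mulVec_neg, hbuild w, ← h.dual_feas.1]
            abel
          have hsub2 : sstar + glue hmn w ((BN hmn A)ᵀ *ᵥ w) - sstar
              = glue hmn w ((BN hmn A)ᵀ *ᵥ w) := by abel
          have hupos2 : ∀ i, 0 ≤ (sstar + glue hmn w ((BN hmn A)ᵀ *ᵥ w)) i := by
            refine forall_split hmn (fun i => ?_) (fun j => ?_)
            · simp only [Pi.add_apply]
              have h2 : glue hmn w ((BN hmn A)ᵀ *ᵥ w) (bIdx hmn i) = w i :=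
                glue_b hmn _ _ i
              rw [hsB i, h2, zero_add]
              exact hw0 i
            · simp only [Pi.add_apply]
              have h2 : glue hmn w ((BN hmn A)ᵀ *ᵥ w) (nIdx hmn j) = ((BN hmn A)ᵀ *ᵥ w) j :=
                glue_n hmn _ _ j
              have h3 := hwle j
              rw [Matrix.neg_mulVec, Pi.neg_apply] at h3
              rw [h2]
              linarith
          have hune2 : sstar + glue hmn w ((BN hmn A)ᵀ *ᵥ w) ≠ sstar := by
            intro heq
            apply hwne
            have h4 : sstar + glue hmn w ((BN hmn A)ᵀ *ᵥ w) - sstar = sstar - sstar := by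
              rw [heq]
            rw [hsub2, sub_self] at h4
            rw [← hb1, h4]
            rfl
          refine ⟨sstar + glue hmn w ((BN hmn A)ᵀ *ᵥ w), hmemd, hupos2, hune2, ?_⟩
          rw [hvald _ hmemd hupos2, hsub2, hb1]
      unfold genMu
      rw [hseteqd, core (-((BN hmn A)ᵀ)) (fun i => xstar (bIdx hmn i))
        (fun j => sstar (nIdx hmn j)) (enorm (qvec A b)) hxB hsN hCq]
      refine congrArg _ ?_
      refine iInf_congr fun i => ?_
      have hsum : ∑ jj : Fin (n - m), ((-((BN hmn A)ᵀ)) jj i) ^ 2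
          = ∑ j, (BN hmn A i j) ^ 2 :=
        Finset.sum_congr rfl fun jj _ => by
          rw [Matrix.neg_apply, Matrix.transpose_apply, neg_sq]
      rw [hsum]


end LPPaper
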